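/- Let G₀ be a DAG over nodes {X₁,...,X_d, Y, E} with E a source node and no edge E → Y. Let D₀ = CH_int(Y) ∪ DE_{G₀}(CH_int(Y)) where CH_int(Y) = CH_{G₀}(Y) ∩ CH_{G₀}(E). Let G be obtained from G₀ by adding, for each j ∈ CH_{G₀}(E), edges k → j for k ranging over some set A_j with A_j ⊆ (complement of D₀) \ {Y, E}. Assume G is acyclic. Then D_G = D₀, where D_G is the analogous forbidden set computed in G: every directed path in G from a node of CH_int(Y) stays within D₀. -/

import Mathlib

/-- Augmentation lemma for the forbidden set: let `G₀` be a DAG (`adj₀`) with source node `E`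
and no edge `E → Y`, and let `D₀ = CH_int(Y) ∪ DE_{G₀}(CH_int(Y))` with
`CH_int(Y) = CH_{G₀}(Y) ∩ CH_{G₀}(E)`.  Let `G` (`adj`) add, for each `j ∈ CH_{G₀}(E)`,
edges `k → j` for `k ∈ A j ⊆ D₀ᶜ \ {Y, E}`, and assume `G` is acyclic.  Then the forbidden
set computed in `G` equals `D₀`. -/
theorem stmt8 {V : Type*} (adj₀ : V → V → Prop) (Y E : V)
    (hacyc₀ : ∀ v, ¬ Relation.TransGen adj₀ v v)
    (hsource : ∀ v, ¬ adj₀ v E)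
    (hEY : ¬ adj₀ E Y)
    (A : V → Set V)
    (hA : ∀ j, adj₀ E j → A j ⊆
      ({v | adj₀ Y v ∧ adj₀ E v} ∪
        {w | ∃ u, (adj₀ Y u ∧ adj₀ E u) ∧ Relation.TransGen adj₀ u w})ᶜ \ {Y, E})
    (adj : V → V → Prop)
    (hadj : ∀ k j, adj k j ↔ (adj₀ k j ∨ (adj₀ E j ∧ k ∈ A j)))
    (hacyc : ∀ v, ¬ Relation.TransGen adj v v) :
    ({v | adj Y v ∧ adj E v} ∪
      {w | ∃ u, (adj Y u ∧ adj E u) ∧ Relation.TransGen adj u w}) =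
    ({v | adj₀ Y v ∧ adj₀ E v} ∪
      {w | ∃ u, (adj₀ Y u ∧ adj₀ E u) ∧ Relation.TransGen adj₀ u w}) := by
  set D₀ : Set V := ({v | adj₀ Y v ∧ adj₀ E v} ∪
      {w | ∃ u, (adj₀ Y u ∧ adj₀ E u) ∧ Relation.TransGen adj₀ u w}) with hD₀
  -- adjacency from Y and E unchanged
  have hYadj : ∀ v, adj Y v ↔ adj₀ Y v := by
    intro v
    rw [hadj]
    constructor
    · rintro (h | ⟨hEv, hYA⟩)
      · exact h
      · exact absurd rfl ((hA v hEv hYA).2 ∘ Or.inl)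
    · exact Or.inl
  have hEadj : ∀ v, adj E v ↔ adj₀ E v := by
    intro v
    rw [hadj]
    constructor
    · rintro (h | ⟨hEv, _⟩)
      · exact h
      · exact hEv
    · exact Or.inl
  -- step lemma : D₀ closed under adj
  have hstep : ∀ u w, u ∈ D₀ → adj u w → w ∈ D₀ := by
    intro u w hu huw
    rcases (hadj u w).1 huw with h | ⟨hEw, huA⟩
    · rcases hu with hu | ⟨c, hc, hcu⟩
      · exact Or.inr ⟨u, hu, Relation.TransGen.single h⟩
      · exact Or.inr ⟨c, hc, hcu.tail h⟩
    · exact absurd hu (hA w hEw huA).1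
  ext w
  constructor
  · rintro (⟨hYw, hEw⟩ | ⟨u, ⟨hYu, hEu⟩, huw⟩)
    · exact Or.inl ⟨(hYadj w).1 hYw, (hEadj w).1 hEw⟩
    · have hu : u ∈ D₀ := Or.inl ⟨(hYadj u).1 hYu, (hEadj u).1 hEu⟩
      induction huw with
      | single h => exact hstep _ _ hu h
      | tail _ h ih => exact hstep _ _ ih h
  · rintro (⟨hYw, hEw⟩ | ⟨u, ⟨hYu, hEu⟩, huw⟩)
    · exact Or.inl ⟨(hYadj w).2 hYw, (hEadj w).2 hEw⟩
    · exact Or.inr ⟨u, ⟨(hYadj u).2 hYu, (hEadj u).2 hEu⟩,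
        Relation.TransGen.mono (fun a b h => (hadj a b).2 (Or.inl h)) u w huw⟩
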